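/- Sharpness of the trace theorem when κ is linear: suppose κ(θ) = (1−θ)·κ(0) for all θ ∈ [0,1]. Then for every α with 0 < α ≤ κ(0)/log m (note κ(0) = −κ'(1) in this case) there exist a finite positive Borel measure ν on 𝕋 satisfying the (α,1)-Frostman condition with some constant C_ν, and a martingale F ∈ 𝔚 with ‖F‖_{L_1} < ∞, such that sup_{N ≥ 1} ∫_𝕋 ‖Σ_{n=1}^N m^{−α·n}·f_n‖ dν = +∞; in particular I_α does not map 𝔚 boundedly into L_1(ν). -/

import Mathlib

open MeasureTheory ENNReal NNReal

noncomputable section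

namespace MartingaleModel

/-- The cylinder in `ℕ → Fin m` determined by a word `w` of length `n`. -/
def cyl (m n : ℕ) (w : Fin n → Fin m) : Set (ℕ → Fin m) :=
  {x | ∀ i : Fin n, x (i : ℕ) = w i}

/-- `F` is adapted: `F n` depends only on the first `n` coordinates. -/
def AdaptedFun (m : ℕ) {E : Type*} (F : ℕ → (ℕ → Fin m) → E) : Prop :=
  ∀ n (x y : ℕ → Fin m), (∀ i < n, x i = y i) → F n x = F n y

/-- `F` is a martingale for the uniform `m`-adic filtration:
adapted, and each value is the average of the values on the children. -/
def IsMartingaleFun (m : ℕ) {E : Type*} [AddCommGroup E] [Module ℝ E]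
    (F : ℕ → (ℕ → Fin m) → E) : Prop :=
  AdaptedFun m F ∧
    ∀ n (x : ℕ → Fin m), (m : ℝ) • F n x = ∑ j : Fin m, F (n + 1) (Function.update x n j)

/-- Partial sums of the Riesz potential `I_α` applied to the martingale `F`,
`(I_α F)_N = ∑_{n=1}^N m^{-α n} f_n` where `f_n = F_n - F_{n-1}`. -/
def rieszSum (m : ℕ) {E : Type*} [AddCommGroup E] [Module ℝ E] (α : ℝ)
    (F : ℕ → (ℕ → Fin m) → E) (N : ℕ) (x : ℕ → Fin m) : E :=
  ∑ n ∈ Finset.Icc 1 N, ((m : ℝ) ^ (-(α * n)) : ℝ) • (F n x - F (n - 1) x)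

end MartingaleModel

open MartingaleModel

namespace MartingaleModel

/-- The Lorentz `L_{p,1}` quasinorm `‖g‖_{L_{p,1}} = ∫₀^∞ μ({x : ‖g(x)‖ > t})^{1/p} dt`. -/
def lorentzNorm {X : Type*} [MeasurableSpace X] (μ : Measure X) (p : ℝ)
    {E : Type*} [NormedAddCommGroup E] (g : X → E) : ℝ≥0∞ :=
  ∫⁻ t in Set.Ioi (0 : ℝ), (μ {x | t < ‖g x‖}) ^ (1 / p)

/-- The tuple in `V^ℓ` of values of the martingale difference `f_{n+1}` on the `m`
children of the atom of `ℱ_n` containing `x`. -/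
def diffTuple (m : ℕ) {E : Type*} [AddCommGroup E]
    (F : ℕ → (ℕ → Fin m) → E) (n : ℕ) (x : ℕ → Fin m) : Fin m → E :=
  fun j => F (n + 1) (Function.update x n j) - F n x

/-- Membership of a martingale in the Sobolev-type space `𝔚`:
every difference tuple lies in `W`. -/
def MemW (m l : ℕ) (W : Submodule ℝ (Fin m → EuclideanSpace ℝ (Fin l)))
    (F : ℕ → (ℕ → Fin m) → EuclideanSpace ℝ (Fin l)) : Prop :=
  ∀ (n : ℕ) (x : ℕ → Fin m), diffTuple m F n x ∈ W

/-- The second structural condition: `W` contains no nonzero vector `v ⊗ a` in which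
`v` has `m - 1` equal coordinates. -/
def SecondStructural (m l : ℕ) (W : Submodule ℝ (Fin m → EuclideanSpace ℝ (Fin l))) : Prop :=
  ∀ (v : Fin m → ℝ) (a : EuclideanSpace ℝ (Fin l)),
    (∑ j, v j = 0) → (∃ j₀ c, ∀ j, j ≠ j₀ → v j = c) →
    (fun j => v j • a) ∈ W → (fun j => v j • a) = 0

end MartingaleModel

namespace MartingaleModel

/-- The admissible set of vectors `v ∈ V` appearing in the definition of `κ`:
`∑ v_j = 0`, `v_j ≥ -1` for all `j`, and `v ⊗ a ∈ W` for some `a ≠ 0`. -/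
def kappaSet (m l : ℕ) (W : Submodule ℝ (Fin m → EuclideanSpace ℝ (Fin l))) :
    Set (Fin m → ℝ) :=
  {v | (∑ j, v j = 0) ∧ (∀ j, -1 ≤ v j) ∧
    ∃ a : EuclideanSpace ℝ (Fin l), a ≠ 0 ∧ (fun j => v j • a) ∈ W}

/-- The function `κ`: for `θ ∈ (0,1]`,
`κ(θ) = sup { θ·log((1/m)·∑_j |1+v_j|^{1/θ}) }` over the admissible set, and
`κ(0) = sup { log (max_j (1+v_j)) }` over the same set. -/
def kappa (m l : ℕ) (W : Submodule ℝ (Fin m → EuclideanSpace ℝ (Fin l))) (θ : ℝ) : ℝ :=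
  if θ = 0 then
    sSup ((fun v : Fin m → ℝ => Real.log (⨆ j : Fin m, (1 + v j))) '' kappaSet m l W)
  else
    sSup ((fun v : Fin m → ℝ =>
      θ * Real.log ((1 / m) * ∑ j : Fin m, |1 + v j| ^ (1 / θ))) '' kappaSet m l W)

end MartingaleModel

namespace MartingaleModel

lemma measurableSet_cyl (m n : ℕ) (w : Fin n → Fin m) : MeasurableSet (cyl m n w) := by
  have h : cyl m n w = ⋂ i : Fin n, (fun x : ℕ → Fin m => x (i : ℕ)) ⁻¹' {w i} := by
    ext x; simp [cyl]
  rw [h]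
  exact MeasurableSet.iInter fun i => (measurable_pi_apply _) (measurableSet_singleton _)

/-- `∫⁻` of a function of the first `n` coordinates, as a sum over words. -/
lemma lintegral_cylinder_fn (m : ℕ) (μ : Measure (ℕ → Fin m)) (n : ℕ)
    (G : (Fin n → Fin m) → ℝ≥0∞) :
    ∫⁻ x, G (fun i => x (i : ℕ)) ∂μ = ∑ w : Fin n → Fin m, G w * μ (cyl m n w) := by
  have hpt : ∀ x : ℕ → Fin m,
      G (fun i => x (i : ℕ)) =
        ∑ w : Fin n → Fin m, (cyl m n w).indicator (fun _ => G w) x := by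
    intro x
    rw [Finset.sum_eq_single (fun i : Fin n => x (i : ℕ))]
    · rw [Set.indicator_of_mem]; intro i; rfl
    · intro w _ hw
      rw [Set.indicator_of_notMem]
      intro hx
      exact hw (funext fun i => (hx i).symm)
    · intro h; exact absurd (Finset.mem_univ _) h
  calc ∫⁻ x, G (fun i => x (i : ℕ)) ∂μ
      = ∫⁻ x, ∑ w : Fin n → Fin m, (cyl m n w).indicator (fun _ => G w) x ∂μ := by
        exact lintegral_congr hpt
    _ = ∑ w : Fin n → Fin m, ∫⁻ x, (cyl m n w).indicator (fun _ => G w) x ∂μ := by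
        exact lintegral_finset_sum _ fun w _ =>
          (measurable_const.indicator (measurableSet_cyl m n w))
    _ = ∑ w : Fin n → Fin m, G w * μ (cyl m n w) := by
        refine Finset.sum_congr rfl fun w _ => ?_
        exact lintegral_indicator_const (measurableSet_cyl m n w) _

section DigitExpansion

variable (m : ℕ) (q : Fin m → ℝ)

/-- `q` extended to `ℕ` by zero. -/
def qe : ℕ → ℝ := fun i => if h : i < m then q ⟨i, h⟩ else 0

/-- Cumulative sums of `q`. -/
def Qc : ℕ → ℝ := fun t => ∑ i ∈ Finset.range t, qe m q i

/-- The digit of `x ∈ [0,1)`. -/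
def dig : ℝ → ℕ := fun x => Nat.findGreatest (fun t => Qc m q t ≤ x) m

/-- The shift map. -/
def shft : ℝ → ℝ := fun x => (x - Qc m q (dig m q x)) / qe m q (dig m q x)

/-- The digit as an element of `Fin m`. -/
def digF (hm : 0 < m) : ℝ → Fin m := fun x => ⟨dig m q x % m, Nat.mod_lt _ hm⟩

/-- The full digit expansion map. -/
def digits (hm : 0 < m) : ℝ → ℕ → Fin m := fun x i => digF m q hm ((shft m q)^[i] x)

variable {m q}

lemma qe_nonneg (hq0 : ∀ j, 0 ≤ q j) (i : ℕ) : 0 ≤ qe m q i := by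
  unfold qe; split
  · exact hq0 _
  · exact le_rfl

lemma qe_coe (j : Fin m) : qe m q (j : ℕ) = q j := by
  unfold qe; rw [dif_pos j.isLt]

lemma Qc_mono (hq0 : ∀ j, 0 ≤ q j) : Monotone (Qc m q) := by
  intro s t hst
  exact Finset.sum_le_sum_of_subset_of_nonneg (Finset.range_subset_range.2 hst)
    (fun i _ _ => qe_nonneg hq0 i)

lemma Qc_zero : Qc m q 0 = 0 := by simp [Qc]

lemma Qc_total (hq1 : ∑ j, q j = 1) : Qc m q m = 1 := by
  unfold Qc
  rw [← Fin.sum_univ_eq_sum_range (fun i => qe m q i) m]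
  rw [← hq1]
  exact Finset.sum_congr rfl fun j _ => qe_coe j

lemma Qc_succ (j : Fin m) : Qc m q ((j : ℕ) + 1) = Qc m q (j : ℕ) + q j := by
  unfold Qc; rw [Finset.sum_range_succ, qe_coe]

lemma Qc_nonneg (hq0 : ∀ j, 0 ≤ q j) (t : ℕ) : 0 ≤ Qc m q t :=
  Qc_zero ▸ Qc_mono hq0 (Nat.zero_le t)

lemma dig_mono : Monotone (dig m q) := by
  intro x y hxy
  exact Nat.findGreatest_mono (fun t ht => le_trans ht hxy) le_rfl

lemma measurable_dig : Measurable (dig m q) := dig_mono.measurable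

lemma measurable_shft : Measurable (shft m q) := by
  unfold shft
  have h1 : Measurable fun x : ℝ => Qc m q (dig m q x) :=
    (measurable_from_top (f := Qc m q)).comp measurable_dig
  have h2 : Measurable fun x : ℝ => qe m q (dig m q x) :=
    (measurable_from_top (f := qe m q)).comp measurable_dig
  exact (measurable_id.sub h1).div h2

lemma measurable_digF (hm : 0 < m) : Measurable (digF m q hm) :=
  (measurable_from_top (f := fun t : ℕ => (⟨t % m, Nat.mod_lt _ hm⟩ : Fin m))).comp
    measurable_dig

lemma measurable_digits (hm : 0 < m) : Measurable (digits m q hm) := by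
  refine measurable_pi_lambda _ fun i => ?_
  exact (measurable_digF hm).comp (Measurable.iterate measurable_shft i)

/-- On the digit interval of `j`, the digit is `j`. -/
lemma dig_eq (hq0 : ∀ j, 0 ≤ q j) (j : Fin m) {x : ℝ}
    (h1 : Qc m q (j : ℕ) ≤ x) (h2 : x < Qc m q (j : ℕ) + q j) : dig m q x = (j : ℕ) := by
  have h2' : x < Qc m q ((j : ℕ) + 1) := by rw [Qc_succ]; exact h2
  have hge : (j : ℕ) ≤ dig m q x :=
    Nat.le_findGreatest (le_of_lt j.isLt) h1
  have hspec : Qc m q (dig m q x) ≤ x :=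
    Nat.findGreatest_spec (P := fun t => Qc m q t ≤ x) (le_of_lt j.isLt) h1
  rcases lt_or_eq_of_le hge with hlt | heq
  · exfalso
    have : Qc m q ((j : ℕ) + 1) ≤ Qc m q (dig m q x) := Qc_mono hq0 hlt
    linarith
  · exact heq.symm

lemma dig_lt (hq0 : ∀ j, 0 ≤ q j) (hq1 : ∑ j, q j = 1) (hm : 0 < m) {x : ℝ}
    (hx0 : 0 ≤ x) (hx1 : x < 1) : dig m q x < m := by
  rcases lt_or_eq_of_le (show dig m q x ≤ m from Nat.findGreatest_le m) with h | h
  · exact h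
  · exfalso
    have hspec : Qc m q (dig m q x) ≤ x :=
      Nat.findGreatest_spec (P := fun t => Qc m q t ≤ x) (Nat.zero_le m)
        (by show Qc m q 0 ≤ x; rw [Qc_zero]; exact hx0)
    rw [show Qc m q (dig m q x) = Qc m q m from congrArg _ h, Qc_total hq1] at hspec
    linarith

/-- Characterization of the digit on `[0,1)`. -/
lemma digF_eq_iff (hq0 : ∀ j, 0 ≤ q j) (hq1 : ∑ j, q j = 1) (hm : 0 < m) {x : ℝ}
    (hx0 : 0 ≤ x) (hx1 : x < 1) (j : Fin m) :
    digF m q hm x = j ↔ (Qc m q (j : ℕ) ≤ x ∧ x < Qc m q (j : ℕ) + q j) := by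
  constructor
  · intro h
    have hd : dig m q x = (j : ℕ) := by
      have := congrArg (fun z : Fin m => (z : ℕ)) h
      simpa [digF, Nat.mod_eq_of_lt (dig_lt hq0 hq1 hm hx0 hx1)] using this
    have hspec : Qc m q (dig m q x) ≤ x :=
      Nat.findGreatest_spec (P := fun t => Qc m q t ≤ x) (Nat.zero_le m)
        (by show Qc m q 0 ≤ x; rw [Qc_zero]; exact hx0)
    have hgr : ¬ Qc m q (dig m q x + 1) ≤ x :=
      Nat.findGreatest_is_greatest (P := fun t => Qc m q t ≤ x) (n := m)
        (Nat.lt_succ_self _) (by rw [hd]; exact j.isLt)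
    rw [hd] at hspec hgr
    rw [Qc_succ] at hgr
    exact ⟨hspec, lt_of_not_ge hgr⟩
  · rintro ⟨h1, h2⟩
    have hd := dig_eq hq0 j h1 h2
    unfold digF
    ext
    simp [hd, Nat.mod_eq_of_lt j.isLt]

/-- The main interval lemma: the set of `x ∈ [0,1)` with prescribed first `n` digits
is an interval of length `∏ q (w i)`. -/
lemma digits_interval (hq0 : ∀ j, 0 ≤ q j) (hq1 : ∑ j, q j = 1) (hm : 0 < m) :
    ∀ (n : ℕ) (w : Fin n → Fin m), ∃ L : ℝ, 0 ≤ L ∧ L + ∏ i, q (w i) ≤ 1 ∧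
      ∀ x, 0 ≤ x → x < 1 →
        ((∀ i : Fin n, digits m q hm x (i : ℕ) = w i) ↔
          (L ≤ x ∧ x < L + ∏ i, q (w i))) := by
  intro n
  induction n with
  | zero =>
    intro w
    refine ⟨0, le_rfl, by simp, fun x hx0 hx1 => ?_⟩
    simp only [Finset.univ_eq_empty, Finset.prod_empty]
    constructor
    · intro _; constructor <;> [exact hx0; simpa using hx1]
    · intro _ i; exact absurd i.isLt (Nat.not_lt_zero _)
  | succ n ih =>
    intro w
    set j := w 0 with hj
    set w' : Fin n → Fin m := fun i => w i.succ with hw'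
    obtain ⟨L', hL'0, hL'1, hiff⟩ := ih w'
    set r' : ℝ := ∏ i, q (w' i) with hr'
    have hr'0 : 0 ≤ r' := Finset.prod_nonneg fun i _ => hq0 _
    have hprod : ∏ i, q (w i) = q j * r' := by
      rw [hr', hw', hj]; exact Fin.prod_univ_succ _
    rcases eq_or_lt_of_le (hq0 j) with hqj | hqj
    · -- q j = 0 : empty interval
      refine ⟨0, le_rfl, ?_, fun x hx0 hx1 => ?_⟩
      · rw [hprod, ← hqj]; norm_num
      · rw [hprod, ← hqj]
        constructor
        · intro h
          exfalso
          have h0 := h 0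
          have : digF m q hm x = j := h0
          rw [digF_eq_iff hq0 hq1 hm hx0 hx1] at this
          rw [← hqj] at this
          linarith [this.1, this.2]
        · intro h; exfalso; simp at h; linarith [h.1, h.2]
    · -- q j > 0
      refine ⟨Qc m q (j : ℕ) + q j * L', ?_, ?_, fun x hx0 hx1 => ?_⟩
      · have h1 := Qc_nonneg hq0 (j : ℕ)
        have h2 : 0 ≤ q j * L' := mul_nonneg (le_of_lt hqj) hL'0
        linarith
      · rw [hprod]
        have hle : Qc m q ((j : ℕ) + 1) ≤ 1 := by
          rw [← Qc_total hq1]; exact Qc_mono hq0 j.isLt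
        rw [Qc_succ] at hle
        nlinarith [hqj.le, hL'0, hr'0, hL'1]
      · rw [hprod]
        set c := Qc m q (j : ℕ) with hc
        constructor
        · intro h
          have h0 : digF m q hm x = j := h 0
          rw [digF_eq_iff hq0 hq1 hm hx0 hx1] at h0
          rw [← hc] at h0
          have hdig : dig m q x = (j : ℕ) := dig_eq hq0 j h0.1 h0.2
          have hs : shft m q x = (x - c) / (q j) := by
            unfold shft; rw [hdig, qe_coe, hc]
          have hs0 : 0 ≤ shft m q x := by
            rw [hs]; exact div_nonneg (by linarith [h0.1]) hqj.le
          have hs1 : shft m q x < 1 := by rw [hs, div_lt_one hqj]; linarith [h0.2]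
          have htail : ∀ i : Fin n, digits m q hm (shft m q x) (i : ℕ) = w' i := by
            intro i
            have hi := h i.succ
            rwa [show ((i.succ : Fin (n + 1)) : ℕ) = (i : ℕ) + 1 from rfl,
              show digits m q hm x ((i : ℕ) + 1) = digits m q hm (shft m q x) (i : ℕ) from by
                unfold digits; rw [Function.iterate_succ_apply]] at hi
          have hmem := (hiff _ hs0 hs1).1 htail
          rw [hs] at hmem
          constructor
          · have h5 := hmem.1; rw [le_div_iff₀ hqj] at h5; linarith
          · have h5 := hmem.2; rw [div_lt_iff₀ hqj] at h5; linarith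
        · rintro ⟨hx1', hx2'⟩
          have hd1 : c ≤ x := by nlinarith [mul_nonneg hqj.le hL'0]
          have hd2 : x < c + q j := by nlinarith [hqj.le, hL'1, hr'0]
          have h0 : digF m q hm x = j :=
            (digF_eq_iff hq0 hq1 hm hx0 hx1 j).2 ⟨hd1, hd2⟩
          have hdig : dig m q x = (j : ℕ) := dig_eq hq0 j hd1 hd2
          have hs : shft m q x = (x - c) / (q j) := by
            unfold shft; rw [hdig, qe_coe, hc]
          have hs0 : 0 ≤ shft m q x := by
            rw [hs]; exact div_nonneg (by linarith) hqj.le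
          have hs1 : shft m q x < 1 := by rw [hs, div_lt_one hqj]; linarith
          have hmem : L' ≤ shft m q x ∧ shft m q x < L' + r' := by
            rw [hs]
            refine ⟨?_, ?_⟩
            · rw [le_div_iff₀ hqj]; linarith
            · rw [div_lt_iff₀ hqj]; linarith
          have htail := (hiff _ hs0 hs1).2 hmem
          intro i
          refine Fin.cases ?_ ?_ i
          · exact h0
          · intro i'
            have hti := htail i'
            show digits m q hm x ((i'.succ : Fin (n + 1)) : ℕ) = w i'.succ
            rw [show ((i'.succ : Fin (n + 1)) : ℕ) = (i' : ℕ) + 1 from rfl]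
            unfold digits
            rw [Function.iterate_succ_apply]
            exact hti

end DigitExpansion

/-- The product-type measure on `ℕ → Fin m` with one-coordinate marginals `q`. -/
def nuMeas (m : ℕ) (q : Fin m → ℝ) (hm : 0 < m) : Measure (ℕ → Fin m) :=
  (volume.restrict (Set.Ico (0 : ℝ) 1)).map (digits m q hm)

lemma nuMeas_cyl {m : ℕ} {q : Fin m → ℝ} (hq0 : ∀ j, 0 ≤ q j) (hq1 : ∑ j, q j = 1)
    (hm : 0 < m) (n : ℕ) (w : Fin n → Fin m) :
    nuMeas m q hm (cyl m n w) = ENNReal.ofReal (∏ i, q (w i)) := by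
  obtain ⟨L, hL0, hL1, hiff⟩ := digits_interval hq0 hq1 hm n w
  rw [nuMeas, Measure.map_apply (measurable_digits hm) (measurableSet_cyl m n w),
    Measure.restrict_apply' measurableSet_Ico]
  have hset : digits m q hm ⁻¹' (cyl m n w) ∩ Set.Ico 0 1
      = Set.Ico L (L + ∏ i, q (w i)) := by
    ext x
    simp only [Set.mem_inter_iff, Set.mem_preimage, Set.mem_Ico, cyl, Set.mem_setOf_eq]
    constructor
    · rintro ⟨h1, ⟨h2, h3⟩⟩; exact (hiff x h2 h3).1 h1
    · rintro ⟨h1, h2⟩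
      have hx0 : 0 ≤ x := le_trans hL0 h1
      have hx1 : x < 1 := lt_of_lt_of_le h2 hL1
      exact ⟨(hiff x hx0 hx1).2 ⟨h1, h2⟩, hx0, hx1⟩
  rw [hset, Real.volume_Ico]
  congr 1; ring

lemma nuMeas_univ {m : ℕ} {q : Fin m → ℝ} (hm : 0 < m) :
    nuMeas m q hm Set.univ = 1 := by
  rw [nuMeas, Measure.map_apply (measurable_digits hm) MeasurableSet.univ,
    Set.preimage_univ, Measure.restrict_apply' measurableSet_Ico, Set.univ_inter,
    Real.volume_Ico]
  norm_num

instance nuMeas_finite {m : ℕ} {q : Fin m → ℝ} {hm : 0 < m} :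
    IsFiniteMeasure (nuMeas m q hm) :=
  ⟨by rw [nuMeas_univ hm]; exact one_lt_top⟩


section Extraction

variable {m l : ℕ} {W : Submodule ℝ (Fin m → EuclideanSpace ℝ (Fin l))}

lemma zero_mem_kappaSet (hm : 3 ≤ m) (hl : 1 ≤ l) : (0 : Fin m → ℝ) ∈ kappaSet m l W := by
  refine ⟨by simp, fun j => by norm_num, ?_⟩
  refine ⟨WithLp.toLp 2 (fun _ => (1 : ℝ)), ?_, ?_⟩
  · intro h
    have := congrArg (fun z => z ⟨0, hl⟩) h
    simpa using this
  · have : (fun j : Fin m => (0 : Fin m → ℝ) j • (WithLp.toLp 2 (fun _ => (1:ℝ)) : EuclideanSpace ℝ (Fin l)))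
        = 0 := by funext j; simp
    rw [this]; exact W.zero_mem

variable (hm : 3 ≤ m)

lemma sum_one_add {v : Fin m → ℝ} (hv : ∑ j, v j = 0) :
    ∑ j, (1 + v j) = m := by
  rw [Finset.sum_add_distrib, hv]
  simp

lemma one_add_le (hm : 3 ≤ m) {v : Fin m → ℝ} (hv : ∑ j, v j = 0) (hv2 : ∀ j, -1 ≤ v j)
    (j : Fin m) : 1 + v j ≤ m := by
  have h := Finset.single_le_sum (f := fun i => 1 + v i)
    (fun i _ => by show (0:ℝ) ≤ 1 + v i; linarith [hv2 i]) (Finset.mem_univ j)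
  rw [sum_one_add hv] at h
  exact h

lemma exists_one_le (hm : 3 ≤ m) {v : Fin m → ℝ} (hv : ∑ j, v j = 0) :
    ∃ j, 1 ≤ 1 + v j := by
  by_contra h
  push_neg at h
  have hnm : Nonempty (Fin m) := Fin.pos_iff_nonempty.mp (by omega)
  have hne : (Finset.univ : Finset (Fin m)).Nonempty := Finset.univ_nonempty
  have hlt := Finset.sum_lt_sum_of_nonempty hne (f := fun j => 1 + v j) (g := fun _ => (1:ℝ))
    (fun j _ => h j)
  rw [sum_one_add hv] at hlt
  simp at hlt

lemma one_le_mx (hm : 3 ≤ m) {v : Fin m → ℝ} (hv : ∑ j, v j = 0) :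
    1 ≤ ⨆ j, (1 + v j) := by
  obtain ⟨j, hj⟩ := exists_one_le hm hv
  exact le_trans hj (le_ciSup (f := fun j => 1 + v j)
    (Set.Finite.bddAbove (Set.finite_range _)) j)

lemma mx_le_m (hm : 3 ≤ m) {v : Fin m → ℝ} (hv : ∑ j, v j = 0) (hv2 : ∀ j, -1 ≤ v j) :
    (⨆ j, (1 + v j)) ≤ m := by
  have : Nonempty (Fin m) := Fin.pos_iff_nonempty.mp (by omega)
  exact ciSup_le fun j => one_add_le hm hv hv2 j

lemma log_mx_le_kappa0 (hm : 3 ≤ m) {v : Fin m → ℝ} (hv : v ∈ kappaSet m l W) :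
    Real.log (⨆ j, (1 + v j)) ≤ kappa m l W 0 := by
  rw [kappa, if_pos rfl]
  refine le_csSup ⟨Real.log m, ?_⟩ ⟨v, hv, rfl⟩
  rintro y ⟨u, hu, rfl⟩
  have h1 : (1:ℝ) ≤ ⨆ j, (1 + u j) := one_le_mx hm hu.1
  exact Real.log_le_log (by linarith) (mx_le_m hm hu.1 hu.2.1)

lemma mx_le_M (hm : 3 ≤ m) {v : Fin m → ℝ} (hv : v ∈ kappaSet m l W) :
    (⨆ j, (1 + v j)) ≤ Real.exp (kappa m l W 0) := by
  have h1 : (1:ℝ) ≤ ⨆ j, (1 + v j) := one_le_mx hm hv.1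
  calc (⨆ j, (1 + v j)) = Real.exp (Real.log (⨆ j, (1 + v j))) :=
        (Real.exp_log (by linarith)).symm
    _ ≤ _ := Real.exp_le_exp.2 (log_mx_le_kappa0 hm hv)

/-- The admissible set is compact. -/
lemma isCompact_kappaSet (hm : 3 ≤ m) : IsCompact (kappaSet m l W) := by
  set C : Set ((Fin m → ℝ) × EuclideanSpace ℝ (Fin l)) :=
    {p | (∑ j, p.1 j = 0) ∧ (∀ j, -1 ≤ p.1 j) ∧ ‖p.2‖ = 1 ∧ (fun j => p.1 j • p.2) ∈ W}
    with hC
  have himg : kappaSet m l W = Prod.fst '' C := by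
    ext v
    constructor
    · rintro ⟨h1, h2, a, ha0, haW⟩
      refine ⟨(v, ‖a‖⁻¹ • a), ⟨h1, h2, norm_smul_inv_norm ha0, ?_⟩, rfl⟩
      have heq : (fun j => v j • (‖a‖⁻¹ • a)) = ‖a‖⁻¹ • (fun j => v j • a) := by
        funext j
        show v j • (‖a‖⁻¹ • a) = ‖a‖⁻¹ • (v j • a)
        rw [smul_comm]
      rw [heq]
      exact W.smul_mem _ haW
    · rintro ⟨⟨v', a⟩, ⟨h1, h2, ha1, haW⟩, rfl⟩
      refine ⟨h1, h2, a, fun h => ?_, haW⟩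
      rw [h] at ha1; simp at ha1
  rw [himg]
  refine IsCompact.image ?_ continuous_fst
  apply Metric.isCompact_of_isClosed_isBounded
  · have h1 : IsClosed {p : (Fin m → ℝ) × EuclideanSpace ℝ (Fin l) | ∑ j, p.1 j = 0} :=
      isClosed_eq (by fun_prop) continuous_const
    have h2 : IsClosed {p : (Fin m → ℝ) × EuclideanSpace ℝ (Fin l) | ∀ j, -1 ≤ p.1 j} := by
      have : {p : (Fin m → ℝ) × EuclideanSpace ℝ (Fin l) | ∀ j, -1 ≤ p.1 j}
          = ⋂ j, {p | -1 ≤ p.1 j} := by ext p; simp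
      rw [this]
      exact isClosed_iInter fun j =>
        isClosed_le continuous_const ((continuous_apply j).comp continuous_fst)
    have h3 : IsClosed {p : (Fin m → ℝ) × EuclideanSpace ℝ (Fin l) | ‖p.2‖ = 1} :=
      isClosed_eq (continuous_norm.comp continuous_snd) continuous_const
    have h4 : IsClosed {p : (Fin m → ℝ) × EuclideanSpace ℝ (Fin l) |
        (fun j => p.1 j • p.2) ∈ W} := by
      have hWc : IsClosed (W : Set (Fin m → EuclideanSpace ℝ (Fin l))) :=
        Submodule.closed_of_finiteDimensional W
      exact hWc.preimage (continuous_pi fun j =>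
        ((continuous_apply j).comp continuous_fst).smul continuous_snd)
    have : C = {p : (Fin m → ℝ) × EuclideanSpace ℝ (Fin l) | ∑ j, p.1 j = 0}
        ∩ ({p | ∀ j, -1 ≤ p.1 j} ∩ ({p | ‖p.2‖ = 1} ∩ {p | (fun j => p.1 j • p.2) ∈ W})) := by
      ext p
      simp only [hC, Set.mem_setOf_eq, Set.mem_inter_iff]
      try tauto
    rw [this]
    exact h1.inter (h2.inter (h3.inter h4))
  · rw [Metric.isBounded_iff_subset_closedBall 0]
    refine ⟨m, fun p hp => ?_⟩
    obtain ⟨h1, h2, h3, _⟩ := hp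
    rw [Metric.mem_closedBall, dist_zero_right]
    have hm3 : (3:ℝ) ≤ m := by exact_mod_cast hm
    rw [Prod.norm_def]
    refine max_le ?_ (by rw [h3]; linarith)
    rw [pi_norm_le_iff_of_nonneg (by linarith)]
    intro j
    rw [Real.norm_eq_abs, abs_le]
    constructor
    · linarith [h2 j]
    · have := one_add_le hm h1 h2 j
      linarith

/-- The extremal structure: a two-valued admissible vector realizing `κ(0)`. -/
lemma exists_extremal (hm : 3 ≤ m) (hl : 1 ≤ l)
    (hlin2 : kappa m l W (1/2 : ℝ) = (1 - 1/2) * kappa m l W 0) :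
    ∃ v ∈ kappaSet m l W,
      ∀ j, 1 + v j = 0 ∨ 1 + v j = Real.exp (kappa m l W 0) := by
  have hne : (kappaSet m l W).Nonempty := ⟨0, zero_mem_kappaSet hm hl⟩
  set Φ : (Fin m → ℝ) → ℝ := fun v => ∑ j, (1 + v j)^2 with hΦ
  obtain ⟨v, hvK, hvmax'⟩ := (isCompact_kappaSet hm (l := l) (W := W)).exists_isMaxOn hne
    (Continuous.continuousOn (show Continuous Φ by fun_prop))
  have hvmax : ∀ u ∈ kappaSet m l W, Φ u ≤ Φ v := fun u hu => hvmax' hu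
  set M := Real.exp (kappa m l W 0) with hM
  have hm3 : (3:ℝ) ≤ m := by exact_mod_cast hm
  -- rewrite kappa at 1/2
  have hfun : (fun v : Fin m → ℝ =>
      (1/2 : ℝ) * Real.log ((1 / m) * ∑ j : Fin m, |1 + v j| ^ (1 / (1/2 : ℝ))))
      = fun v => (1/2 : ℝ) * Real.log ((1 / m) * Φ v) := by
    funext u
    congr 1
    congr 1
    congr 1
    refine Finset.sum_congr rfl fun j _ => ?_
    rw [show (1 / (1/2 : ℝ)) = ((2:ℕ) : ℝ) by norm_num, Real.rpow_natCast, sq_abs]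
  have hΦ_pos : ∀ u ∈ kappaSet m l W, (1:ℝ) ≤ Φ u := by
    intro u hu
    obtain ⟨j, hj⟩ := exists_one_le hm hu.1
    have h1 : (1:ℝ) ≤ (1 + u j)^2 := by nlinarith
    have h2 : (1 + u j)^2 ≤ ∑ i, (1 + u i)^2 := Finset.single_le_sum
      (f := fun i => (1 + u i)^2) (fun i _ => sq_nonneg _) (Finset.mem_univ j)
    show (1:ℝ) ≤ ∑ j, (1 + u j)^2
    linarith
  have hΦ_le : ∀ u ∈ kappaSet m l W, Φ u ≤ m^3 := by
    intro u hu
    show ∑ j, (1 + u j)^2 ≤ ((m:ℝ))^3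
    calc ∑ j, (1 + u j)^2 ≤ ∑ j : Fin m, (m:ℝ)^2 := by
          refine Finset.sum_le_sum fun j _ => ?_
          have h1 : 0 ≤ 1 + u j := by linarith [hu.2.1 j]
          have h2 := one_add_le hm hu.1 hu.2.1 j
          nlinarith
      _ = m * (m:ℝ)^2 := by simp [mul_comm]
      _ = (m:ℝ)^3 := by ring
  have hsup : kappa m l W (1/2 : ℝ) = (1/2 : ℝ) * Real.log ((1 / m) * Φ v) := by
    rw [kappa, if_neg (by norm_num), hfun]
    apply le_antisymm
    · apply csSup_le (hne.image _)
      rintro y ⟨u, hu, rfl⟩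
      show (1/2 : ℝ) * Real.log ((1/m) * Φ u) ≤ (1/2 : ℝ) * Real.log ((1/m) * Φ v)
      have h3 := hvmax u hu
      have hp := hΦ_pos u hu
      have hminv : (0:ℝ) < 1/m := by positivity
      have hlog : Real.log ((1/m) * Φ u) ≤ Real.log ((1/m) * Φ v) :=
        Real.log_le_log (by positivity) (by nlinarith)
      linarith
    · apply le_csSup
      · refine ⟨(1/2 : ℝ) * Real.log ((1/m) * m^3), ?_⟩
        rintro y ⟨u, hu, rfl⟩
        show (1/2 : ℝ) * Real.log ((1/m) * Φ u) ≤ (1/2 : ℝ) * Real.log ((1/m) * (m:ℝ)^3)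
        have h1 := hΦ_pos u hu
        have h2 := hΦ_le u hu
        have hminv : (0:ℝ) < 1/m := by positivity
        have hlog : Real.log ((1/m) * Φ u) ≤ Real.log ((1/m) * (m:ℝ)^3) :=
          Real.log_le_log (by positivity) (by nlinarith)
        linarith
      · exact ⟨v, hvK, rfl⟩
  have hΦv : (1 / m) * Φ v = M := by
    rw [hlin2] at hsup
    have : Real.log ((1 / m) * Φ v) = kappa m l W 0 := by linarith
    rw [hM, ← this, Real.exp_log]
    have := hΦ_pos v hvK
    positivity
  -- dichotomy
  set mx := ⨆ j, (1 + v j) with hmx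
  have hle_mx : ∀ j, 1 + v j ≤ mx :=
    fun j => le_ciSup (f := fun j => 1 + v j) (Set.Finite.bddAbove (Set.finite_range _)) j
  have hnn : ∀ j, 0 ≤ 1 + v j := fun j => by linarith [hvK.2.1 j]
  have hmxM : mx ≤ M := mx_le_M hm hvK
  have hsum : ∑ j, (1 + v j) = m := sum_one_add hvK.1
  have hterm : ∀ j, (1 + v j)^2 ≤ (1 + v j) * mx := by
    intro j
    have := hle_mx j
    nlinarith [hnn j]
  have hΦ_le_mx : Φ v ≤ m * mx := by
    calc Φ v ≤ ∑ j, (1 + v j) * mx := Finset.sum_le_sum fun j _ => hterm j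
      _ = (∑ j, (1 + v j)) * mx := by rw [Finset.sum_mul]
      _ = m * mx := by rw [hsum]
  have hMmx : M ≤ mx := by
    have hΦvM : Φ v = m * M := by
      have h := hΦv
      field_simp at h
      linarith
    nlinarith [hΦ_le_mx, hΦvM]
  have hmxM' : mx = M := le_antisymm hmxM hMmx
  have hΦvM : ∑ j, (1 + v j)^2 = m * M := by
    have h := hΦv
    field_simp at h
    show Φ v = (m:ℝ) * M
    linarith
  have hzero : ∑ j, ((1 + v j) * mx - (1 + v j)^2) = 0 := by
    rw [Finset.sum_sub_distrib, ← Finset.sum_mul, hsum, hΦvM, hmxM']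
    ring
  have hterm0 : ∀ j ∈ Finset.univ, (1 + v j) * mx - (1 + v j)^2 = 0 := by
    rw [← Finset.sum_eq_zero_iff_of_nonneg (fun j _ => by linarith [hterm j])]
    exact hzero
  refine ⟨v, hvK, fun j => ?_⟩
  have h := hterm0 j (Finset.mem_univ j)
  have : (1 + v j) * (mx - (1 + v j)) = 0 := by ring_nf; ring_nf at h; linarith
  rcases mul_eq_zero.1 this with h' | h'
  · exact Or.inl h'
  · right; rw [← hmxM']; linarith

end Extraction

section Cascade

variable {m : ℕ} {E : Type*} [AddCommGroup E] [Module ℝ E] (c : Fin m → ℝ) (a : E)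

/-- The multiplicative cascade martingale. -/
def cascade : ℕ → (ℕ → Fin m) → E :=
  fun n x => (∏ i ∈ Finset.range n, c (x i)) • a

variable {c a}

lemma cascade_adapted : AdaptedFun m (cascade c a) := by
  intro n x y h
  unfold cascade
  congr 1
  exact Finset.prod_congr rfl fun i hi => by rw [h i (Finset.mem_range.mp hi)]

lemma cascade_update (n : ℕ) (x : ℕ → Fin m) (j : Fin m) :
    cascade c a (n + 1) (Function.update x n j)
      = ((∏ i ∈ Finset.range n, c (x i)) * c j) • a := by
  unfold cascade
  congr 1
  rw [Finset.prod_range_succ]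
  congr 1
  · exact Finset.prod_congr rfl fun i hi =>
      by rw [Function.update_of_ne (Nat.ne_of_lt (Finset.mem_range.mp hi))]
  · rw [Function.update_self]

lemma cascade_martingale (hcsum : ∑ j, c j = m) : IsMartingaleFun m (cascade c a) := by
  refine ⟨cascade_adapted, fun n x => ?_⟩
  have h : ∀ j : Fin m, cascade c a (n + 1) (Function.update x n j)
      = ((∏ i ∈ Finset.range n, c (x i)) * c j) • a := cascade_update n x
  rw [Finset.sum_congr rfl fun j _ => h j, ← Finset.sum_smul, ← Finset.mul_sum, hcsum]
  unfold cascade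
  rw [mul_comm, ← smul_smul]

lemma cascade_diffTuple (v : Fin m → ℝ) (hc : ∀ j, c j = 1 + v j) (n : ℕ) (x : ℕ → Fin m) :
    diffTuple m (cascade c a) n x
      = (∏ i ∈ Finset.range n, c (x i)) • (fun j => v j • a) := by
  funext j
  show cascade c a (n + 1) (Function.update x n j) - cascade c a n x
      = (∏ i ∈ Finset.range n, c (x i)) • (v j • a)
  rw [cascade_update]
  unfold cascade
  rw [smul_smul, ← sub_smul]
  congr 1
  rw [hc j]
  ring

end Cascade

section Integrals

variable {m : ℕ} {E : Type*} [NormedAddCommGroup E] [NormedSpace ℝ E]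

/-- `L₁` norm of the cascade martingale. -/
lemma cascade_eLpNorm {c : Fin m → ℝ} {a : E} (hc0 : ∀ j, 0 ≤ c j)
    (hcsum : ∑ j, c j = m) (hm0 : 0 < m) (P : Measure (ℕ → Fin m))
    (hPcyl : ∀ (n : ℕ) (w : Fin n → Fin m), P (cyl m n w) = ((m : ℝ≥0∞))⁻¹ ^ n) (n : ℕ) :
    eLpNorm (cascade c a n) 1 P = (‖a‖₊ : ℝ≥0∞) := by
  rw [eLpNorm_one_eq_lintegral_enorm]; simp only [enorm_eq_nnnorm]
  have hpt : ∀ x : ℕ → Fin m, ((‖cascade c a n x‖₊ : ℝ≥0∞))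
      = (fun w : Fin n → Fin m => ENNReal.ofReal (∏ i, c (w i)) * ‖a‖₊)
          (fun i => x (i : ℕ)) := by
    intro x
    show ((‖(∏ i ∈ Finset.range n, c (x i)) • a‖₊ : ℝ≥0∞)) = _
    rw [nnnorm_smul, ENNReal.coe_mul]
    congr 1
    rw [← enorm_eq_nnnorm, Real.enorm_eq_ofReal (Finset.prod_nonneg fun i _ => hc0 _)]
    congr 1
    exact (Fin.prod_univ_eq_prod_range (fun i => c (x i)) n).symm
  rw [lintegral_congr hpt,
    lintegral_cylinder_fn m P n (fun w => ENNReal.ofReal (∏ i, c (w i)) * ‖a‖₊)]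
  have hterm : ∀ w : Fin n → Fin m,
      ENNReal.ofReal (∏ i, c (w i)) * ‖a‖₊ * P (cyl m n w)
        = (‖a‖₊ : ℝ≥0∞) * ∏ i : Fin n, (ENNReal.ofReal (c (w i)) * (m : ℝ≥0∞)⁻¹) := by
    intro w
    rw [hPcyl, ENNReal.ofReal_prod_of_nonneg (fun i _ => hc0 _), Finset.prod_mul_distrib]
    rw [Finset.prod_const, Finset.card_univ, Fintype.card_fin]
    ring
  rw [Finset.sum_congr rfl fun w _ => hterm w, ← Finset.mul_sum]
  have hswap : ∑ w : Fin n → Fin m, ∏ i : Fin n, (ENNReal.ofReal (c (w i)) * (m : ℝ≥0∞)⁻¹)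
      = ∏ i : Fin n, ∑ j : Fin m, (ENNReal.ofReal (c j) * (m : ℝ≥0∞)⁻¹) := by
    rw [← Fintype.piFinset_univ,
      Finset.sum_prod_piFinset Finset.univ
        (fun (i : Fin n) (j : Fin m) => ENNReal.ofReal (c j) * (m : ℝ≥0∞)⁻¹)]
  rw [hswap]
  have hsum1 : ∑ j : Fin m, (ENNReal.ofReal (c j) * (m : ℝ≥0∞)⁻¹) = 1 := by
    rw [← Finset.sum_mul, ← ENNReal.ofReal_sum_of_nonneg (fun j _ => hc0 _), hcsum,
      ENNReal.ofReal_natCast, ENNReal.mul_inv_cancel]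
    · exact Nat.cast_ne_zero.mpr (Nat.pos_iff_ne_zero.mp hm0)
    · exact natCast_ne_top m
  rw [hsum1, Finset.prod_const_one, mul_one]

/-- The key lower bound for the Riesz sums against `ν`. -/
lemma riesz_lintegral_lower (hm0 : 0 < m) (hm1 : (1:ℝ) ≤ m) {α : ℝ} (hα0 : 0 < α)
    (c : Fin m → ℝ) (a : E) (q : Fin m → ℝ)
    (hq0 : ∀ j, 0 ≤ q j) (hq1 : ∑ j, q j = 1)
    (hs : ∑ j, q j * c j = (m:ℝ) ^ α)
    (ν : Measure (ℕ → Fin m))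
    (hνcyl : ∀ (n : ℕ) (w : Fin n → Fin m), ν (cyl m n w) = ENNReal.ofReal (∏ i, q (w i)))
    (N : ℕ) (hN : 1 ≤ N) :
    ENNReal.ofReal ((N : ℝ) * (1 - (m:ℝ) ^ (-α)) * ‖a‖)
      ≤ ∫⁻ x, (‖rieszSum m α (cascade c a) N x‖₊ : ℝ≥0∞) ∂ν := by
  have hmR : (0:ℝ) < m := by exact_mod_cast hm0
  set s : ℝ := (m:ℝ) ^ α with hsdef
  set gfun : ℕ → ℕ → Fin m → ℝ :=
    fun n i j => if i < n - 1 then c j else if i = n - 1 then c j - 1 else 1 with hgfun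
  set R : (Fin N → Fin m) → ℝ :=
    fun w => ∑ n ∈ Finset.Icc 1 N, (m:ℝ) ^ (-(α * (n:ℕ))) * ∏ i : Fin N, gfun n (i:ℕ) (w i)
    with hR
  -- reduce the structured product
  have step0 : ∀ n ∈ Finset.Icc 1 N, ∀ y : ℕ → Fin m,
      ∏ i : Fin N, gfun n (i:ℕ) (y (i:ℕ))
        = (∏ i ∈ Finset.range (n-1), c (y i)) * (c (y (n-1)) - 1) := by
    rintro n hn y
    rw [Finset.mem_Icc] at hn
    obtain ⟨k, rfl⟩ : ∃ k, n = k + 1 := ⟨n - 1, (Nat.succ_pred_eq_of_pos hn.1).symm⟩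
    have hkN : k + 1 ≤ N := hn.2
    rw [Fin.prod_univ_eq_prod_range (fun i => gfun (k+1) i (y i)) N]
    have hsub : Finset.range (k+1) ⊆ Finset.range N := Finset.range_subset_range.2 hkN
    rw [← Finset.prod_subset hsub ?h1]
    case h1 =>
      intro i hiN hik
      rw [Finset.mem_range] at hiN
      rw [Finset.mem_range, not_lt] at hik
      show gfun (k+1) i (y i) = 1
      rw [hgfun]
      simp only [Nat.add_sub_cancel]
      rw [if_neg (by omega), if_neg (by omega)]
    rw [Finset.prod_range_succ]
    simp only [Nat.add_sub_cancel]
    congr 1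
    · refine Finset.prod_congr rfl fun i hi => ?_
      rw [Finset.mem_range] at hi
      show gfun (k+1) i (y i) = c (y i)
      rw [hgfun]
      simp only [Nat.add_sub_cancel]
      rw [if_pos hi]
    · show gfun (k+1) k (y k) = c (y k) - 1
      rw [hgfun]
      simp
  -- pointwise identification of the Riesz sum
  have step1 : ∀ x : ℕ → Fin m,
      rieszSum m α (cascade c a) N x = R (fun i : Fin N => x (i:ℕ)) • a := by
    intro x
    rw [hR]
    unfold rieszSum
    rw [Finset.sum_smul]
    refine Finset.sum_congr rfl fun n hn => ?_
    have h0 := step0 n hn x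
    rw [Finset.mem_Icc] at hn
    obtain ⟨k, rfl⟩ : ∃ k, n = k + 1 := ⟨n - 1, (Nat.succ_pred_eq_of_pos hn.1).symm⟩
    have hdiff : cascade c a (k+1) x - cascade c a ((k+1) - 1) x
        = ((∏ i ∈ Finset.range k, c (x i)) * (c (x k) - 1)) • a := by
      show cascade c a (k+1) x - cascade c a k x = _
      unfold cascade
      rw [Finset.prod_range_succ, ← sub_smul]
      congr 1
      ring
    rw [hdiff, smul_smul]
    congr 1
    rw [h0]
    simp only [Nat.add_sub_cancel]
  -- the ν-integral as a word sum
  have step2 : ∫⁻ x, (‖rieszSum m α (cascade c a) N x‖₊ : ℝ≥0∞) ∂ν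
      = ∑ w : Fin N → Fin m,
          (ENNReal.ofReal |R w| * ‖a‖₊) * ENNReal.ofReal (∏ i, q (w i)) := by
    have hpt : ∀ x : ℕ → Fin m, ((‖rieszSum m α (cascade c a) N x‖₊ : ℝ≥0∞))
        = (fun w : Fin N → Fin m => ENNReal.ofReal |R w| * ‖a‖₊) (fun i => x (i:ℕ)) := by
      intro x
      rw [step1 x]
      show ((‖R (fun i : Fin N => x (i:ℕ)) • a‖₊ : ℝ≥0∞)) = _
      rw [nnnorm_smul, ENNReal.coe_mul]
      congr 1
      exact Real.enorm_eq_ofReal_abs _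
    rw [lintegral_congr hpt,
      lintegral_cylinder_fn m ν N (fun w => ENNReal.ofReal |R w| * ‖a‖₊)]
    exact Finset.sum_congr rfl fun w _ => by rw [hνcyl]
  -- the exact value of the signed sum
  have hprodq : ∀ w : Fin N → Fin m, (0:ℝ) ≤ ∏ i, q (w i) :=
    fun w => Finset.prod_nonneg fun i _ => hq0 _
  have step4 : ∑ w : Fin N → Fin m, R w * ∏ i, q (w i)
      = (N : ℝ) * (1 - (m:ℝ) ^ (-α)) := by
    have hswap : ∑ w : Fin N → Fin m, R w * ∏ i, q (w i)
        = ∑ n ∈ Finset.Icc 1 N, (m:ℝ) ^ (-(α * (n:ℕ)))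
            * ∑ w : Fin N → Fin m, ∏ i : Fin N, (q (w i) * gfun n (i:ℕ) (w i)) := by
      rw [hR]
      simp only [Finset.sum_mul]
      rw [Finset.sum_comm]
      refine Finset.sum_congr rfl fun n _ => ?_
      rw [Finset.mul_sum]
      refine Finset.sum_congr rfl fun w _ => ?_
      rw [mul_assoc]
      congr 1
      rw [← Finset.prod_mul_distrib]
      refine Finset.prod_congr rfl fun i _ => ?_
      ring
    rw [hswap]
    have hinner : ∀ n ∈ Finset.Icc 1 N,
        ∑ w : Fin N → Fin m, ∏ i : Fin N, (q (w i) * gfun n (i:ℕ) (w i))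
          = s ^ (n-1) * (s - 1) := by
      intro n hn
      rw [Finset.mem_Icc] at hn
      obtain ⟨k, rfl⟩ : ∃ k, n = k + 1 := ⟨n - 1, (Nat.succ_pred_eq_of_pos hn.1).symm⟩
      have hkN : k + 1 ≤ N := hn.2
      rw [← Fintype.piFinset_univ,
        Finset.sum_prod_piFinset Finset.univ
          (fun (i : Fin N) (j : Fin m) => q j * gfun (k+1) (i:ℕ) j)]
      have hcol : ∀ i : Fin N, ∑ j : Fin m, q j * gfun (k+1) (i:ℕ) j
          = if (i:ℕ) < k then s else if (i:ℕ) = k then s - 1 else 1 := by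
        intro i
        rw [hgfun]
        simp only [Nat.add_sub_cancel]
        split_ifs with h1 h2
        · simpa using hs
        · have h3 : ∑ j : Fin m, q j * (c j - 1)
              = (∑ j : Fin m, q j * c j) - ∑ j : Fin m, q j := by
            rw [← Finset.sum_sub_distrib]
            exact Finset.sum_congr rfl fun j _ => by ring
          rw [h3, hs, hq1]
        · simp [hq1]
      rw [Finset.prod_congr rfl fun i _ => hcol i]
      rw [Fin.prod_univ_eq_prod_range
        (fun i => if i < k then s else if i = k then s - 1 else 1) N]
      have hsub : Finset.range (k+1) ⊆ Finset.range N := Finset.range_subset_range.2 hkN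
      rw [← Finset.prod_subset hsub (fun i hiN hik => by
        rw [Finset.mem_range] at hiN
        rw [Finset.mem_range, not_lt] at hik
        rw [if_neg (by omega), if_neg (by omega)])]
      rw [Finset.prod_range_succ]
      rw [if_neg (lt_irrefl k), if_pos rfl]
      simp only [Nat.add_sub_cancel]
      congr 1
      have hcongr : ∀ i ∈ Finset.range k,
          (if i < k then s else if i = k then s - 1 else 1) = s := fun i hi => by
        rw [Finset.mem_range] at hi; rw [if_pos hi]
      rw [Finset.prod_congr rfl hcongr, Finset.prod_const, Finset.card_range]
    rw [Finset.sum_congr rfl fun n hn => by rw [hinner n hn]]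
    have hterm : ∀ n ∈ Finset.Icc 1 N,
        (m:ℝ) ^ (-(α * (n:ℕ))) * (s ^ (n-1) * (s - 1)) = 1 - (m:ℝ) ^ (-α) := by
      intro n hn
      rw [Finset.mem_Icc] at hn
      have hcast : ((n - 1 : ℕ) : ℝ) = (n : ℝ) - 1 := by
        rw [Nat.cast_sub hn.1]; norm_num
      have hpow : s ^ (n-1) = (m:ℝ) ^ (α * ((n:ℝ) - 1)) := by
        rw [hsdef, ← Real.rpow_natCast ((m:ℝ) ^ α) (n-1), ← Real.rpow_mul (le_of_lt hmR),
          hcast]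
      have h1 : (m:ℝ) ^ (-(α * ((n:ℕ):ℝ))) * (m:ℝ) ^ (α * ((n:ℝ) - 1)) = (m:ℝ) ^ (-α) := by
        rw [← Real.rpow_add hmR]; congr 1; push_cast; ring
      have h2 : (m:ℝ) ^ (-α) * s = 1 := by
        rw [hsdef, ← Real.rpow_add hmR, show -α + α = (0:ℝ) by ring, Real.rpow_zero]
      calc (m:ℝ) ^ (-(α * ((n:ℕ):ℝ))) * (s ^ (n-1) * (s - 1))
          = ((m:ℝ) ^ (-(α * ((n:ℕ):ℝ))) * (m:ℝ) ^ (α * ((n:ℝ) - 1))) * (s - 1) := by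
            rw [hpow]; ring
        _ = (m:ℝ) ^ (-α) * (s - 1) := by rw [h1]
        _ = 1 - (m:ℝ) ^ (-α) := by rw [mul_sub, h2, mul_one]
    rw [Finset.sum_congr rfl hterm, Finset.sum_const, Nat.card_Icc]
    simp only [Nat.add_sub_cancel, nsmul_eq_mul]
  -- put everything together
  have habs : ∑ w : Fin N → Fin m, R w * ∏ i, q (w i)
      ≤ ∑ w : Fin N → Fin m, |R w| * ∏ i, q (w i) :=
    Finset.sum_le_sum fun w _ => mul_le_mul_of_nonneg_right (le_abs_self _) (hprodq w)
  rw [step2]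
  have hstep3 : ∑ w : Fin N → Fin m,
      (ENNReal.ofReal |R w| * ‖a‖₊) * ENNReal.ofReal (∏ i, q (w i))
      = (‖a‖₊ : ℝ≥0∞) * ENNReal.ofReal (∑ w : Fin N → Fin m, |R w| * ∏ i, q (w i)) := by
    rw [ENNReal.ofReal_sum_of_nonneg (fun w _ => mul_nonneg (abs_nonneg _) (hprodq w)),
      Finset.mul_sum]
    refine Finset.sum_congr rfl fun w _ => ?_
    rw [ENNReal.ofReal_mul (abs_nonneg _)]
    ring
  rw [hstep3]
  have hfin : ENNReal.ofReal ((N : ℝ) * (1 - (m:ℝ) ^ (-α)) * ‖a‖)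
      = (‖a‖₊ : ℝ≥0∞) * ENNReal.ofReal ((N : ℝ) * (1 - (m:ℝ) ^ (-α))) := by
    rw [mul_comm ((‖a‖₊ : ℝ≥0∞)) _, ← enorm_eq_nnnorm, ← ofReal_norm,
      ← ENNReal.ofReal_mul ?hge]
    case hge =>
      have hle1 : (m:ℝ) ^ (-α) ≤ 1 :=
        Real.rpow_le_one_of_one_le_of_nonpos hm1 (by linarith)
      exact mul_nonneg (Nat.cast_nonneg N) (by linarith)
  rw [hfin]
  refine mul_le_mul_right ?_ _
  refine ENNReal.ofReal_le_ofReal ?_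
  rw [← step4]
  exact habs


end Integrals

end MartingaleModel

set_option maxHeartbeats 2000000 in
/-- **Sharpness of the trace theorem when `κ` is linear.** Suppose
`κ(θ) = (1-θ)·κ(0)` on `[0,1]`. Then for every `α` with `0 < α ≤ κ(0)/log m` there
exist a finite positive Borel measure `ν` on `𝕋` satisfying the `(α,1)`-Frostman
condition with some constant `C_ν`, and a martingale `F ∈ 𝔚` with `‖F‖_{L_1} < ∞`,
such that `sup_{N ≥ 1} ∫ ‖∑_{n=1}^N m^{-αn} f_n‖ dν = ∞`; in particular `I_α` does
not map `𝔚` boundedly into `L_1(ν)`. -/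
theorem trace_theorem_sharpness (m l : ℕ) (hm : 3 ≤ m) (hl : 1 ≤ l)
    (P : Measure (ℕ → Fin m)) (hP : IsProbabilityMeasure P)
    (hPcyl : ∀ (n : ℕ) (w : Fin n → Fin m), P (cyl m n w) = ((m : ℝ≥0∞))⁻¹ ^ n)
    (W : Submodule ℝ (Fin m → EuclideanSpace ℝ (Fin l)))
    (hWV : ∀ b ∈ W, ∑ j : Fin m, b j = 0)
    (hlin : ∀ θ ∈ Set.Icc (0 : ℝ) 1, kappa m l W θ = (1 - θ) * kappa m l W 0)
    (α : ℝ) (hα0 : 0 < α) (hα : α ≤ kappa m l W 0 / Real.log m) :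
    ∃ (ν : Measure (ℕ → Fin m)) (_ : IsFiniteMeasure ν) (Cν : ℝ≥0),
      (∀ (n : ℕ) (w : Fin n → Fin m),
        ν (cyl m n w) ≤ (Cν : ℝ≥0∞) * ENNReal.ofReal ((m : ℝ) ^ ((α - 1) * n))) ∧
      ∃ F : ℕ → (ℕ → Fin m) → EuclideanSpace ℝ (Fin l),
        IsMartingaleFun m F ∧ (⨆ n, eLpNorm (F n) 1 P) < ⊤ ∧ MemW m l W F ∧
        (⨆ (N : ℕ) (_ : 1 ≤ N),
          ∫⁻ x, (‖rieszSum m α F N x‖₊ : ℝ≥0∞) ∂ν) = ⊤ := by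
  classical
  have hm0 : 0 < m := by omega
  have hmR : (0:ℝ) < m := by exact_mod_cast hm0
  have hm1 : (1:ℝ) < m := by exact_mod_cast (show 1 < m by omega)
  have hlogm : (0:ℝ) < Real.log m := Real.log_pos hm1
  have hκα : α * Real.log m ≤ kappa m l W 0 := by
    rw [le_div_iff₀ hlogm] at hα; exact hα
  obtain ⟨v, hvK, hdich⟩ := exists_extremal hm hl (hlin (1/2) ⟨by norm_num, by norm_num⟩)
  set M := Real.exp (kappa m l W 0) with hMdef
  have hMα : (m:ℝ) ^ α ≤ M := by
    rw [Real.rpow_def_of_pos hmR]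
    exact Real.exp_le_exp.2 (by rw [mul_comm] at hκα; exact hκα)
  have hmα1 : (1:ℝ) < (m:ℝ) ^ α :=
    (Real.one_lt_rpow_iff_of_pos hmR).2 (Or.inl ⟨hm1, hα0⟩)
  have hM1 : (1:ℝ) < M := lt_of_lt_of_le hmα1 hMα
  obtain ⟨a, ha0, haW⟩ := hvK.2.2
  set c : Fin m → ℝ := fun j => 1 + v j with hcdef
  have hc0 : ∀ j, 0 ≤ c j := fun j => by
    have := hvK.2.1 j
    show (0:ℝ) ≤ 1 + v j
    linarith
  have hcsum : ∑ j, c j = m := sum_one_add hvK.1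
  have hdich' : ∀ j, c j = 0 ∨ c j = M := fun j => hdich j
  set S : Finset (Fin m) := Finset.univ.filter (fun j => c j ≠ 0) with hSdef
  set k : ℕ := S.card with hkdef
  have hcS : ∀ j ∈ S, c j = M := by
    intro j hj
    rw [hSdef, Finset.mem_filter] at hj
    rcases hdich' j with h | h
    · exact absurd h hj.2
    · exact h
  have hkM : (k:ℝ) * M = m := by
    have hsplit := Finset.sum_filter_add_sum_filter_not Finset.univ (fun j => c j ≠ 0) c
    have h1 : ∑ j ∈ S, c j = (k:ℝ) * M := by
      rw [Finset.sum_congr rfl hcS, Finset.sum_const, nsmul_eq_mul]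
    have h2 : ∑ j ∈ Finset.univ.filter (fun j => ¬ c j ≠ 0), c j = 0 :=
      Finset.sum_eq_zero fun j hj => not_not.mp (Finset.mem_filter.mp hj).2
    rw [← hSdef] at hsplit
    rw [h1, h2, hcsum] at hsplit
    linarith
  have hk1 : 1 ≤ k := by
    by_contra h
    have hk0 : k = 0 := by omega
    rw [hk0] at hkM
    simp at hkM
    linarith
  have hkR : (0:ℝ) < k := by exact_mod_cast hk1
  have hkm : (k:ℝ) < m := by nlinarith
  have hknat : k ≤ m := by
    rw [hkdef, hSdef]
    calc (Finset.univ.filter (fun j => c j ≠ 0)).card ≤ (Finset.univ : Finset (Fin m)).card :=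
          Finset.card_filter_le _ _
      _ = m := by rw [Finset.card_univ, Fintype.card_fin]
  set qS : ℝ := (m:ℝ) ^ (α - 1) with hqSdef
  have hqS0 : 0 < qS := Real.rpow_pos_of_pos hmR _
  have hmqS : (m:ℝ) * qS = (m:ℝ) ^ α := by
    rw [hqSdef]
    nth_rewrite 1 [show (m:ℝ) = (m:ℝ) ^ (1:ℝ) from (Real.rpow_one _).symm]
    rw [← Real.rpow_add hmR]
    ring_nf
  have hM0 : (0:ℝ) < M := by linarith
  have hkqS : (k:ℝ) * qS ≤ 1 := by
    have hk : (k:ℝ) = m / M := by rw [eq_div_iff (ne_of_gt hM0)]; exact hkM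
    rw [hk, div_mul_eq_mul_div, div_le_one hM0, hmqS]
    exact hMα
  set qT : ℝ := (1 - k * qS) / ((m:ℝ) - k) with hqTdef
  have hqT0 : 0 ≤ qT := div_nonneg (by linarith) (by linarith)
  have hqTS : qT ≤ qS := by
    rw [hqTdef, div_le_iff₀ (by linarith)]
    nlinarith
  set q : Fin m → ℝ := fun j => if c j ≠ 0 then qS else qT with hqdef
  have hq0 : ∀ j, 0 ≤ q j := fun j => by
    show (0:ℝ) ≤ if c j ≠ 0 then qS else qT
    split_ifs
    · exact hqS0.le
    · exact hqT0
  have hqle : ∀ j, q j ≤ qS := fun j => by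
    show (if c j ≠ 0 then qS else qT) ≤ qS
    split_ifs
    · exact le_rfl
    · exact hqTS
  have hqSval : ∀ j ∈ S, q j = qS := by
    intro j hj
    have := (Finset.mem_filter.mp (hSdef ▸ hj)).2
    show (if c j ≠ 0 then qS else qT) = qS
    rw [if_pos this]
  have hqTval : ∀ j ∈ Finset.univ.filter (fun j => ¬ c j ≠ 0), q j = qT := by
    intro j hj
    have := (Finset.mem_filter.mp hj).2
    show (if c j ≠ 0 then qS else qT) = qT
    rw [if_neg this]
  have hcardS : ((Finset.univ.filter (fun j => ¬ c j ≠ 0)).card : ℝ) = (m:ℝ) - k := by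
    have hcc := Finset.card_filter_add_card_filter_not
      (s := (Finset.univ : Finset (Fin m))) (p := fun j => c j ≠ 0)
    rw [Finset.card_univ, Fintype.card_fin] at hcc
    have hSk : (Finset.filter (fun j => c j ≠ 0) Finset.univ).card = k := by rw [hkdef, hSdef]
    have hfe : (Finset.filter (fun a => ¬ (fun j => c j ≠ 0) a) Finset.univ)
        = Finset.univ.filter (fun j => ¬ c j ≠ 0) := rfl
    rw [hSk, hfe] at hcc
    have h5 : (Finset.univ.filter (fun j => ¬ c j ≠ 0)).card = m - k := by omega
    rw [h5, Nat.cast_sub hknat]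
  have hmk0 : ((m:ℝ) - k) ≠ 0 := by linarith
  have hq1 : ∑ j, q j = 1 := by
    have hsplit := Finset.sum_filter_add_sum_filter_not Finset.univ (fun j => c j ≠ 0) q
    rw [← hSdef] at hsplit
    have h1 : ∑ j ∈ S, q j = (k:ℝ) * qS := by
      rw [Finset.sum_congr rfl hqSval, Finset.sum_const, nsmul_eq_mul]
    have h2 : ∑ j ∈ Finset.univ.filter (fun j => ¬ c j ≠ 0), q j = 1 - (k:ℝ) * qS := by
      rw [Finset.sum_congr rfl hqTval, Finset.sum_const, nsmul_eq_mul, hcardS, hqTdef,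
        mul_div_assoc']
      rw [mul_comm, mul_div_assoc, div_self hmk0, mul_one]
    rw [h1, h2] at hsplit
    rw [← hsplit]
    ring
  have hsq : ∑ j, q j * c j = (m:ℝ) ^ α := by
    have hsplit := Finset.sum_filter_add_sum_filter_not Finset.univ
      (fun j => c j ≠ 0) (fun j => q j * c j)
    rw [← hSdef] at hsplit
    have h1 : ∑ j ∈ S, q j * c j = (k:ℝ) * (qS * M) := by
      rw [Finset.sum_congr rfl (fun j hj => by rw [hqSval j hj, hcS j hj]),
        Finset.sum_const, nsmul_eq_mul]
    have h2 : ∑ j ∈ Finset.univ.filter (fun j => ¬ c j ≠ 0), q j * c j = 0 :=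
      Finset.sum_eq_zero fun j hj => by
        rw [not_not.mp (Finset.mem_filter.mp hj).2, mul_zero]
    rw [h1, h2, add_zero] at hsplit
    rw [← hsplit, ← hmqS]
    nlinarith [hkM]
  -- the measure
  refine ⟨nuMeas m q hm0, nuMeas_finite, 1, ?_, ?_⟩
  · -- Frostman condition
    intro n w
    rw [nuMeas_cyl hq0 hq1 hm0 n w, ENNReal.coe_one, one_mul]
    apply ENNReal.ofReal_le_ofReal
    calc ∏ i, q (w i) ≤ ∏ _i : Fin n, qS :=
          Finset.prod_le_prod (fun i _ => hq0 _) (fun i _ => hqle _)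
      _ = qS ^ n := by rw [Finset.prod_const, Finset.card_univ, Fintype.card_fin]
      _ = (m:ℝ) ^ ((α - 1) * n) := by
          rw [hqSdef, ← Real.rpow_natCast ((m:ℝ) ^ (α-1)) n, ← Real.rpow_mul hmR.le]
  · -- the martingale
    refine ⟨cascade c a, cascade_martingale hcsum, ?_, ?_, ?_⟩
    · -- L¹ bound
      have hsup : ⨆ n, eLpNorm (cascade c a n) 1 P = (‖a‖₊ : ℝ≥0∞) := by
        rw [iSup_congr (cascade_eLpNorm hc0 hcsum hm0 P hPcyl)]
        exact iSup_const
      rw [hsup]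
      exact coe_lt_top
    · -- membership in 𝔚
      intro n x
      rw [cascade_diffTuple v (fun j => rfl) n x]
      exact W.smul_mem _ haW
    · -- divergence
      set δ : ℝ := (1 - (m:ℝ) ^ (-α)) * ‖a‖ with hδdef
      have hmα : (m:ℝ) ^ (-α) < 1 :=
        Real.rpow_lt_one_of_one_lt_of_neg hm1 (by linarith)
      have hδ0 : 0 < δ := by
        rw [hδdef]
        have : (0:ℝ) < ‖a‖ := norm_pos_iff.2 ha0
        nlinarith
      have hlow : ∀ N : ℕ, 1 ≤ N → ENNReal.ofReal ((N:ℝ) * δ)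
          ≤ ∫⁻ x, (‖rieszSum m α (cascade c a) N x‖₊ : ℝ≥0∞) ∂(nuMeas m q hm0) := by
        intro N hN
        have h := riesz_lintegral_lower hm0 hm1.le hα0 c a q hq0 hq1 hsq (nuMeas m q hm0)
          (fun n w => nuMeas_cyl hq0 hq1 hm0 n w) N hN
        rw [hδdef, ← mul_assoc]
        exact h
      apply ENNReal.eq_top_of_forall_nnreal_le
      intro r
      obtain ⟨N, hN1, hNr⟩ : ∃ N : ℕ, 1 ≤ N ∧ (r:ℝ) ≤ (N:ℝ) * δ := by
        refine ⟨⌈(r:ℝ)/δ⌉₊ + 1, by omega, ?_⟩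
        have h1 : (r:ℝ)/δ ≤ (⌈(r:ℝ)/δ⌉₊ : ℝ) := Nat.le_ceil _
        have h2 : ((⌈(r:ℝ)/δ⌉₊ : ℝ)) ≤ ((⌈(r:ℝ)/δ⌉₊ + 1 : ℕ) : ℝ) := by push_cast; linarith
        have h3 : (r:ℝ)/δ ≤ ((⌈(r:ℝ)/δ⌉₊ + 1 : ℕ) : ℝ) := le_trans h1 h2
        rw [div_le_iff₀ hδ0] at h3
        linarith
      calc (r : ℝ≥0∞) = ENNReal.ofReal (r:ℝ) := (ENNReal.ofReal_coe_nnreal (p := r)).symm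
        _ ≤ ENNReal.ofReal ((N:ℝ) * δ) := ENNReal.ofReal_le_ofReal hNr
        _ ≤ ∫⁻ x, (‖rieszSum m α (cascade c a) N x‖₊ : ℝ≥0∞) ∂(nuMeas m q hm0) :=
            hlow N hN1
        _ ≤ ⨆ (N : ℕ) (_ : 1 ≤ N),
              ∫⁻ x, (‖rieszSum m α (cascade c a) N x‖₊ : ℝ≥0∞) ∂(nuMeas m q hm0) :=
            le_iSup₂ (f := fun (N : ℕ) (_ : 1 ≤ N) =>
              ∫⁻ x, (‖rieszSum m α (cascade c a) N x‖₊ : ℝ≥0∞) ∂(nuMeas m q hm0)) N hN1
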